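/- Let a₁ be a bounded sesquilinear form on V × W with inf-sup constant c > 0 and nondegenerate in the second component, let 𝒢 ⊆ X be nonempty and open, let Φ : X → W* be a continuous affine map and let 𝔠 : 𝒢 → S(H × W, 𝕂) be the restriction of a continuous affine map X → S(H × W, 𝕂). Assume strong well-posedness for every m ∈ 𝒢 (for each φ ∈ W* there is exactly one u ∈ V with a₁(u,w) + 𝔠(m)(ju,w) = φ(w) for all w ∈ W) and let S : 𝒢 → V map m to the unique u ∈ V with a₁(u,w) + 𝔠(m)(ju,w) = Φ(m)(w) for all w ∈ W. Then S is continuously Fréchet differentiable on 𝒢 and for every m₀ ∈ 𝒢 and every κ ∈ (0,1) there exists ρ > 0 such that the closed ball B_ρ(m₀) is contained in 𝒢, the Fréchet derivative DS is bounded on B_ρ(m₀), and for all m₁, m₂ ∈ B_ρ(m₀): ‖j(S(m₁) − S(m₂) − DS(m₂)[m₁ − m₂])‖_H ≤ κ‖j(S(m₁) − S(m₂))‖_H and ‖S(m₁) − S(m₂) − DS(m₂)[m₁ − m₂]‖_V ≤ κ‖S(m₁) − S(m₂)‖_V (κ-tangential cone condition in both norms). -/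

import Mathlib

open ContinuousLinearMap Asymptotics Filter Topology

set_option maxHeartbeats 1000000
set_option synthInstance.maxHeartbeats 200000

theorem tcc_aux {𝕂 V Y H X : Type*} [RCLike 𝕂]
    [NormedAddCommGroup V] [NormedSpace 𝕂 V] [CompleteSpace V]
    [NormedAddCommGroup Y] [NormedSpace 𝕂 Y] [CompleteSpace Y]
    [NormedAddCommGroup H] [NormedSpace 𝕂 H]
    [NormedAddCommGroup X] [NormedSpace 𝕂 X]
    (j : V →L[𝕂] H)
    (𝒢 : Set X) (h𝒢open : IsOpen 𝒢)
    (LΦ : X →L[𝕂] Y) (bΦ : Y) (Φ : X → Y) (hΦ : ∀ m, Φ m = LΦ m + bΦ)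
    (Lc : X →L[𝕂] (H →L[𝕂] Y))
    (A : X → (V →L[𝕂] Y))
    (hAsub : ∀ m₁ m₂ : X, ∀ v : V, A m₁ v - A m₂ v = Lc (m₁ - m₂) (j v))
    (hbij : ∀ m ∈ 𝒢, Function.Bijective (A m))
    (S : X → V)
    (hSm : ∀ m ∈ 𝒢, A m (S m) = Φ m) :
    ∃ S' : X → (X →L[𝕂] V),
      (∀ m ∈ 𝒢, HasFDerivAt S (S' m) m) ∧
      ContinuousOn S' 𝒢 ∧
      ∀ m₀ ∈ 𝒢, ∀ κ : ℝ, κ ∈ Set.Ioo (0 : ℝ) 1 →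
        ∃ ρ > (0 : ℝ), Metric.closedBall m₀ ρ ⊆ 𝒢 ∧
          (∃ K : ℝ, ∀ m ∈ Metric.closedBall m₀ ρ, ‖S' m‖ ≤ K) ∧
          ∀ m₁ ∈ Metric.closedBall m₀ ρ, ∀ m₂ ∈ Metric.closedBall m₀ ρ,
            ‖j (S m₁ - S m₂ - S' m₂ (m₁ - m₂))‖ ≤ κ * ‖j (S m₁ - S m₂)‖ ∧
            ‖S m₁ - S m₂ - S' m₂ (m₁ - m₂)‖ ≤ κ * ‖S m₁ - S m₂‖ := by
  have hAinv : ∀ m ∈ 𝒢, (A m).IsInvertible := by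
    intro m hm
    exact ⟨ContinuousLinearEquiv.ofBijective (A m)
      (LinearMap.ker_eq_bot.mpr (hbij m hm).1)
      (LinearMap.range_eq_top.mpr (hbij m hm).2), rfl⟩
  set Einv : X → (Y →L[𝕂] V) := fun m => (A m).inverse with hEinv
  have hleft : ∀ m ∈ 𝒢, ∀ v : V, Einv m (A m v) = v := by
    intro m hm v
    obtain ⟨e, he⟩ := hAinv m hm
    simp [hEinv, ← he]
  have hright : ∀ m ∈ 𝒢, ∀ φ : Y, A m (Einv m φ) = φ := by
    intro m hm φ
    obtain ⟨e, he⟩ := hAinv m hm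
    simp [hEinv, ← he]
  -- continuity of A
  have hAcont : Continuous A := by
    have hlip : LipschitzWith (‖Lc‖₊ * ‖j‖₊) A := by
      apply LipschitzWith.of_dist_le_mul
      intro m₁ m₂
      rw [dist_eq_norm, dist_eq_norm]
      have h1 : ‖A m₁ - A m₂‖ ≤ ‖Lc‖ * ‖j‖ * ‖m₁ - m₂‖ := by
        refine opNorm_le_bound _ (by positivity) fun v => ?_
        rw [sub_apply, hAsub m₁ m₂ v]
        calc ‖Lc (m₁ - m₂) (j v)‖ ≤ ‖Lc (m₁ - m₂)‖ * ‖j v‖ := le_opNorm _ _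
          _ ≤ (‖Lc‖ * ‖m₁ - m₂‖) * (‖j‖ * ‖v‖) := by
              gcongr
              · exact le_opNorm _ _
              · exact le_opNorm _ _
          _ = ‖Lc‖ * ‖j‖ * ‖m₁ - m₂‖ * ‖v‖ := by ring
      simpa [NNReal.coe_mul] using h1
    exact hlip.continuous
  have hEcont : ∀ m ∈ 𝒢, ContinuousAt Einv m := by
    intro m hm
    obtain ⟨e, he⟩ := hAinv m hm
    have h1 : Einv = fun m' => Ring.inverse ((e.symm : Y →L[𝕂] V) ∘L A m')
        ∘L (e.symm : Y →L[𝕂] V) :=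
      funext fun m' => ContinuousLinearMap.inverse_eq_ringInverse e (A m')
    rw [h1]
    have hg : Continuous fun m' => (e.symm : Y →L[𝕂] V) ∘L A m' :=
      ((compL 𝕂 V Y V (e.symm : Y →L[𝕂] V)).continuous).comp hAcont
    have hval : ((e.symm : Y →L[𝕂] V) ∘L A m) = ((1 : (V →L[𝕂] V)ˣ) : V →L[𝕂] V) := by
      ext v
      simp [← he]
    have hinvc : ContinuousAt Ring.inverse ((e.symm : Y →L[𝕂] V) ∘L A m) := by
      rw [hval]; exact NormedRing.inverse_continuousAt 1
    have hg' : ContinuousAt (fun m' => (e.symm : Y →L[𝕂] V) ∘L A m') m := hg.continuousAt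
    have hc1 : ContinuousAt (fun m' => Ring.inverse ((e.symm : Y →L[𝕂] V) ∘L A m')) m :=
      ContinuousAt.comp (g := Ring.inverse)
        (f := fun m' => (e.symm : Y →L[𝕂] V) ∘L A m') (x := m) hinvc hg'
    exact (((compL 𝕂 Y V V).flip (e.symm : Y →L[𝕂] V)).continuous.continuousAt).comp hc1
  have hSrep : ∀ m ∈ 𝒢, S m = Einv m (Φ m) := by
    intro m hm
    rw [← hSm m hm, hleft m hm]
  have hΦc : Continuous Φ := by
    rw [show Φ = fun m => LΦ m + bΦ from funext hΦ]
    exact LΦ.continuous.add continuous_const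
  have hScont : ∀ m ∈ 𝒢, ContinuousAt S m := by
    intro m hm
    have h1 : ContinuousAt (fun m' => Einv m' (Φ m')) m :=
      isBoundedBilinearMap_apply.continuous.continuousAt.comp (f := fun m' => (Einv m', Φ m'))
        ((hEcont m hm).prodMk hΦc.continuousAt)
    refine h1.congr ?_
    filter_upwards [h𝒢open.mem_nhds hm] with m' hm'
    exact (hSrep m' hm').symm
  set S' : X → (X →L[𝕂] V) := fun m => (Einv m).comp (LΦ - Lc.flip (j (S m))) with hS'
  -- key identity
  have hkey : ∀ m₁ ∈ 𝒢, ∀ m₂ ∈ 𝒢,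
      A m₂ (S m₁ - S m₂ - S' m₂ (m₁ - m₂)) = -(Lc (m₁ - m₂) (j (S m₁ - S m₂))) := by
    intro m₁ hm₁ m₂ hm₂
    have h1 : A m₂ (S m₁) = Φ m₁ - Lc (m₁ - m₂) (j (S m₁)) := by
      rw [← hAsub m₁ m₂ (S m₁), ← hSm m₁ hm₁]
      abel
    have h2 : A m₂ (S' m₂ (m₁ - m₂)) = LΦ (m₁ - m₂) - Lc (m₁ - m₂) (j (S m₂)) := by
      rw [hS']
      simp only [coe_comp', Function.comp_apply]
      rw [hright m₂ hm₂]
      simp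
    have h3 : Lc (m₁ - m₂) (j (S m₁ - S m₂))
        = Lc (m₁ - m₂) (j (S m₁)) - Lc (m₁ - m₂) (j (S m₂)) := by
      rw [map_sub j, map_sub]
    rw [map_sub, map_sub, h1, h2, hSm m₂ hm₂, hΦ m₁, hΦ m₂, h3, LΦ.map_sub]
    abel
  -- basic inversion bound
  have hbound : ∀ m ∈ 𝒢, ∀ v : V, ‖v‖ ≤ ‖Einv m‖ * ‖A m v‖ := by
    intro m hm v
    calc ‖v‖ = ‖Einv m (A m v)‖ := by rw [hleft m hm v]
      _ ≤ ‖Einv m‖ * ‖A m v‖ := le_opNorm _ _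
  -- main error estimate
  have herr : ∀ m₁ ∈ 𝒢, ∀ m₂ ∈ 𝒢,
      ‖S m₁ - S m₂ - S' m₂ (m₁ - m₂)‖
        ≤ ‖Einv m₂‖ * (‖Lc‖ * ‖m₁ - m₂‖ * ‖j (S m₁ - S m₂)‖) := by
    intro m₁ hm₁ m₂ hm₂
    calc ‖S m₁ - S m₂ - S' m₂ (m₁ - m₂)‖
        ≤ ‖Einv m₂‖ * ‖A m₂ (S m₁ - S m₂ - S' m₂ (m₁ - m₂))‖ := hbound m₂ hm₂ _
      _ = ‖Einv m₂‖ * ‖Lc (m₁ - m₂) (j (S m₁ - S m₂))‖ := by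
          rw [hkey m₁ hm₁ m₂ hm₂, norm_neg]
      _ ≤ ‖Einv m₂‖ * (‖Lc‖ * ‖m₁ - m₂‖ * ‖j (S m₁ - S m₂)‖) := by
          gcongr
          calc ‖Lc (m₁ - m₂) (j (S m₁ - S m₂))‖
              ≤ ‖Lc (m₁ - m₂)‖ * ‖j (S m₁ - S m₂)‖ := le_opNorm _ _
            _ ≤ ‖Lc‖ * ‖m₁ - m₂‖ * ‖j (S m₁ - S m₂)‖ := by
                gcongr; exact le_opNorm _ _
  refine ⟨S', ?_, ?_, ?_⟩
  · -- differentiability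
    intro m hm
    rw [hasFDerivAt_iff_isLittleO, isLittleO_iff]
    intro ε hε
    set C : ℝ := ‖Einv m‖ * ‖Lc‖ + 1 with hC
    have hCpos : 0 < C := by positivity
    have hδ : 0 < ε / C := div_pos hε hCpos
    have htend : Tendsto (fun m' => ‖j (S m' - S m)‖) (𝓝 m) (𝓝 0) := by
      have h0 : ContinuousAt (fun m' => j (S m' - S m)) m :=
        j.continuous.continuousAt.comp ((hScont m hm).sub continuousAt_const)
      have : Tendsto (fun m' => j (S m' - S m)) (𝓝 m) (𝓝 (j (S m - S m))) := h0
      simpa using this.norm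
    have hev2 : ∀ᶠ m' in 𝓝 m, ‖j (S m' - S m)‖ < ε / C :=
      htend.eventually_lt_const hδ
    filter_upwards [h𝒢open.mem_nhds hm, hev2] with m' hm' hlt
    calc ‖S m' - S m - S' m (m' - m)‖
        ≤ ‖Einv m‖ * (‖Lc‖ * ‖m' - m‖ * ‖j (S m' - S m)‖) := herr m' hm' m hm
      _ = (‖Einv m‖ * ‖Lc‖) * ‖j (S m' - S m)‖ * ‖m' - m‖ := by ring
      _ ≤ C * (ε / C) * ‖m' - m‖ := by
          apply mul_le_mul_of_nonneg_right ?_ (norm_nonneg _)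
          apply mul_le_mul ?_ hlt.le (norm_nonneg _) hCpos.le
          rw [hC]
          linarith
      _ = ε * ‖m' - m‖ := by
          rw [mul_comm C (ε / C), div_mul_cancel₀ ε (ne_of_gt hCpos)]
  · -- continuity of S'
    intro m hm
    have hGc : ContinuousAt (fun m' => LΦ - Lc.flip (j (S m'))) m := by
      have haff : Continuous fun y : H => LΦ - Lc.flip y := by
        have hlip : LipschitzWith ‖Lc.flip‖₊ fun y : H => LΦ - Lc.flip y := by
          apply LipschitzWith.of_dist_le_mul
          intro y₁ y₂
          rw [dist_eq_norm, dist_eq_norm]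
          have h4 : LΦ - Lc.flip y₁ - (LΦ - Lc.flip y₂) = Lc.flip (y₂ - y₁) := by
            rw [map_sub]; abel
          rw [h4]
          calc ‖Lc.flip (y₂ - y₁)‖ ≤ ‖Lc.flip‖ * ‖y₂ - y₁‖ := le_opNorm _ _
            _ = ‖Lc.flip‖ * ‖y₁ - y₂‖ := by rw [norm_sub_rev]
        exact hlip.continuous
      exact haff.continuousAt.comp
        (j.continuous.continuousAt.comp (hScont m hm))
    have h5 : ContinuousAt S' m :=
      isBoundedBilinearMap_comp.continuous.continuousAt.comp
        (f := fun m' => (Einv m', LΦ - Lc.flip (j (S m'))))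
        ((hEcont m hm).prodMk hGc)
    exact h5.continuousWithinAt
  · -- tangential cone condition
    intro m₀ hm₀ κ hκ
    set C : ℝ := ‖Einv m₀‖ + 1 with hCdef
    have hCpos : 0 < C := by positivity
    have hU : {m | ‖Einv m‖ < C} ∩ 𝒢 ∈ 𝓝 m₀ := by
      refine Filter.inter_mem ?_ (h𝒢open.mem_nhds hm₀)
      have : ContinuousAt (fun m => ‖Einv m‖) m₀ := (hEcont m₀ hm₀).norm
      exact this.eventually_lt_const (by simp [hCdef])
    obtain ⟨r, hr, hball⟩ := Metric.mem_nhds_iff.mp hU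
    set D : ℝ := ‖Lc‖ * (‖j‖ + 1) * C + 1 with hDdef
    have hDpos : 0 < D := by
      have h0 : 0 ≤ ‖Lc‖ * (‖j‖ + 1) * C :=
        mul_nonneg (mul_nonneg Lc.opNorm_nonneg (by positivity)) hCpos.le
      rw [hDdef]
      linarith
    set ρ : ℝ := min (r / 2) (κ / (2 * D)) with hρdef
    have hρpos : 0 < ρ := lt_min (by linarith) (div_pos hκ.1 (by linarith))
    have hsub : Metric.closedBall m₀ ρ ⊆ Metric.ball m₀ r := by
      apply Metric.closedBall_subset_ball
      calc ρ ≤ r / 2 := min_le_left _ _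
        _ < r := by linarith
    have hsub𝒢 : Metric.closedBall m₀ ρ ⊆ 𝒢 :=
      fun m hm => (hball (hsub hm)).2
    have hEinv_bd : ∀ m ∈ Metric.closedBall m₀ ρ, ‖Einv m‖ ≤ C :=
      fun m hm => le_of_lt (hball (hsub hm)).1
    refine ⟨ρ, hρpos, hsub𝒢, ?_, ?_⟩
    · -- bound on S'
      refine ⟨C * (‖LΦ‖ + ‖Lc.flip‖ * (‖j‖ * (C * (‖LΦ‖ * (‖m₀‖ + ρ) + ‖bΦ‖)))), ?_⟩
      intro m hm
      have hm𝒢 := hsub𝒢 hm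
      have hmnorm : ‖m‖ ≤ ‖m₀‖ + ρ := by
        have h7 : ‖m‖ - ‖m₀‖ ≤ ‖m - m₀‖ := norm_sub_norm_le m m₀
        have h8 : ‖m - m₀‖ ≤ ρ := by
          rw [← dist_eq_norm]
          exact Metric.mem_closedBall.mp hm
        linarith
      have hSbd : ‖S m‖ ≤ C * (‖LΦ‖ * (‖m₀‖ + ρ) + ‖bΦ‖) := by
        rw [hSrep m hm𝒢]
        calc ‖Einv m (Φ m)‖ ≤ ‖Einv m‖ * ‖Φ m‖ := le_opNorm _ _
          _ ≤ C * (‖LΦ‖ * (‖m₀‖ + ρ) + ‖bΦ‖) := by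
              apply mul_le_mul (hEinv_bd m hm) ?_ (norm_nonneg _) (le_of_lt hCpos)
              rw [hΦ m]
              calc ‖LΦ m + bΦ‖ ≤ ‖LΦ m‖ + ‖bΦ‖ := norm_add_le _ _
                _ ≤ ‖LΦ‖ * ‖m‖ + ‖bΦ‖ := by gcongr; exact le_opNorm _ _
                _ ≤ ‖LΦ‖ * (‖m₀‖ + ρ) + ‖bΦ‖ := by gcongr
      calc ‖S' m‖ ≤ ‖Einv m‖ * ‖LΦ - Lc.flip (j (S m))‖ := opNorm_comp_le _ _
        _ ≤ C * (‖LΦ‖ + ‖Lc.flip‖ * (‖j‖ * (C * (‖LΦ‖ * (‖m₀‖ + ρ) + ‖bΦ‖)))) := by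
            apply mul_le_mul (hEinv_bd m hm) ?_ (norm_nonneg _) (le_of_lt hCpos)
            calc ‖LΦ - Lc.flip (j (S m))‖ ≤ ‖LΦ‖ + ‖Lc.flip (j (S m))‖ := norm_sub_le _ _
              _ ≤ ‖LΦ‖ + ‖Lc.flip‖ * (‖j‖ * (C * (‖LΦ‖ * (‖m₀‖ + ρ) + ‖bΦ‖))) := by
                  gcongr
                  calc ‖Lc.flip (j (S m))‖ ≤ ‖Lc.flip‖ * ‖j (S m)‖ := le_opNorm _ _
                    _ ≤ ‖Lc.flip‖ * (‖j‖ * ‖S m‖) := by gcongr; exact le_opNorm _ _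
                    _ ≤ ‖Lc.flip‖ * (‖j‖ * (C * (‖LΦ‖ * (‖m₀‖ + ρ) + ‖bΦ‖))) := by gcongr
    · -- cone condition
      intro m₁ hm₁ m₂ hm₂
      have hm₁𝒢 := hsub𝒢 hm₁
      have hm₂𝒢 := hsub𝒢 hm₂
      have hΔ : ‖m₁ - m₂‖ ≤ 2 * ρ := by
        rw [← dist_eq_norm]
        calc dist m₁ m₂ ≤ dist m₁ m₀ + dist m₀ m₂ := dist_triangle _ _ _
          _ ≤ ρ + ρ := by
              refine add_le_add (Metric.mem_closedBall.mp hm₁) ?_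
              rw [dist_comm]
              exact Metric.mem_closedBall.mp hm₂
          _ = 2 * ρ := by ring
      have hDρ : D * ‖m₁ - m₂‖ ≤ κ := by
        have h6 : ρ ≤ κ / (2 * D) := min_le_right _ _
        calc D * ‖m₁ - m₂‖ ≤ D * (2 * ρ) := mul_le_mul_of_nonneg_left hΔ hDpos.le
          _ ≤ D * (2 * (κ / (2 * D))) :=
              mul_le_mul_of_nonneg_left (by linarith) hDpos.le
          _ = κ := by
              have h9 : D ≠ 0 := ne_of_gt hDpos
              field_simp [h9]
      have hV : ‖S m₁ - S m₂ - S' m₂ (m₁ - m₂)‖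
          ≤ C * ‖Lc‖ * ‖m₁ - m₂‖ * ‖j (S m₁ - S m₂)‖ := by
        calc ‖S m₁ - S m₂ - S' m₂ (m₁ - m₂)‖
            ≤ ‖Einv m₂‖ * (‖Lc‖ * ‖m₁ - m₂‖ * ‖j (S m₁ - S m₂)‖) := herr m₁ hm₁𝒢 m₂ hm₂𝒢
          _ ≤ C * (‖Lc‖ * ‖m₁ - m₂‖ * ‖j (S m₁ - S m₂)‖) := by
              apply mul_le_mul_of_nonneg_right (hEinv_bd m₂ hm₂) (by positivity)
          _ = C * ‖Lc‖ * ‖m₁ - m₂‖ * ‖j (S m₁ - S m₂)‖ := by ring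
      constructor
      · -- H norm estimate
        calc ‖j (S m₁ - S m₂ - S' m₂ (m₁ - m₂))‖
            ≤ ‖j‖ * ‖S m₁ - S m₂ - S' m₂ (m₁ - m₂)‖ := le_opNorm _ _
          _ ≤ ‖j‖ * (C * ‖Lc‖ * ‖m₁ - m₂‖ * ‖j (S m₁ - S m₂)‖) := by gcongr
          _ = (‖j‖ * C * ‖Lc‖ * ‖m₁ - m₂‖) * ‖j (S m₁ - S m₂)‖ := by ring
          _ ≤ κ * ‖j (S m₁ - S m₂)‖ := by
              apply mul_le_mul_of_nonneg_right ?_ (norm_nonneg _)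
              calc ‖j‖ * C * ‖Lc‖ * ‖m₁ - m₂‖ ≤ D * ‖m₁ - m₂‖ := by
                    apply mul_le_mul_of_nonneg_right ?_ (norm_nonneg _)
                    rw [hDdef]
                    nlinarith [j.opNorm_nonneg, Lc.opNorm_nonneg, hCpos,
                      mul_nonneg Lc.opNorm_nonneg hCpos.le]
                _ ≤ κ := hDρ
      · -- V norm estimate
        calc ‖S m₁ - S m₂ - S' m₂ (m₁ - m₂)‖
            ≤ C * ‖Lc‖ * ‖m₁ - m₂‖ * ‖j (S m₁ - S m₂)‖ := hV
          _ ≤ C * ‖Lc‖ * ‖m₁ - m₂‖ * (‖j‖ * ‖S m₁ - S m₂‖) :=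
              mul_le_mul_of_nonneg_left (le_opNorm j _)
                (mul_nonneg (mul_nonneg hCpos.le Lc.opNorm_nonneg) (norm_nonneg _))
          _ = (C * ‖Lc‖ * ‖j‖ * ‖m₁ - m₂‖) * ‖S m₁ - S m₂‖ := by ring
          _ ≤ κ * ‖S m₁ - S m₂‖ := by
              apply mul_le_mul_of_nonneg_right ?_ (norm_nonneg _)
              calc C * ‖Lc‖ * ‖j‖ * ‖m₁ - m₂‖ ≤ D * ‖m₁ - m₂‖ := by
                    apply mul_le_mul_of_nonneg_right ?_ (norm_nonneg _)
                    rw [hDdef]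
                    nlinarith [j.opNorm_nonneg, Lc.opNorm_nonneg, hCpos,
                      mul_nonneg Lc.opNorm_nonneg hCpos.le]
                _ ≤ κ := hDρ


/-- Theorem 5.3: if `Φ` is continuous affine and `𝔠` is (the restriction of) a
continuous affine map, and the problem is strongly well-posed on the open set `𝒢`,
then the parameter-to-state operator `S` is continuously Fréchet differentiable on
`𝒢` and satisfies, locally around every `m₀ ∈ 𝒢` and for every `κ ∈ (0,1)`, the
`κ`-tangential cone condition with respect to both `‖·‖_H` and `‖·‖_V`. -/
theorem tangential_cone_condition
    {𝕂 V W H X : Type*} [RCLike 𝕂]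
    [NormedAddCommGroup V] [NormedSpace 𝕂 V] [CompleteSpace V]
    [NormedAddCommGroup W] [NormedSpace 𝕂 W] [CompleteSpace W] [Nontrivial W]
    [NormedAddCommGroup H] [NormedSpace 𝕂 H] [CompleteSpace H]
    [NormedAddCommGroup X] [NormedSpace 𝕂 X] [CompleteSpace X]
    (hrefl : Function.Surjective ⇑(NormedSpace.inclusionInDoubleDual 𝕂 W))
    (j : V →L[𝕂] H) (hj : Function.Injective ⇑j)
    (a₁ : V →L[𝕂] (W →SL[starRingEnd 𝕂] 𝕂))
    (c : ℝ) (hc : 0 < c)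
    (hinfsup : ∀ v : V, c * ‖v‖ ≤ ‖a₁ v‖)
    (hnondeg : ∀ w : W, (∀ v : V, a₁ v w = 0) → w = 0)
    (𝒢 : Set X) (h𝒢open : IsOpen 𝒢) (h𝒢ne : 𝒢.Nonempty)
    (Φ : X → (W →SL[starRingEnd 𝕂] 𝕂))
    (hΦaff : ∃ (L : X →L[𝕂] (W →SL[starRingEnd 𝕂] 𝕂)) (b : W →SL[starRingEnd 𝕂] 𝕂),
      ∀ m : X, Φ m = L m + b)
    (𝔠 : X → (H →L[𝕂] (W →SL[starRingEnd 𝕂] 𝕂)))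
    (h𝔠aff : ∃ (L : X →L[𝕂] (H →L[𝕂] (W →SL[starRingEnd 𝕂] 𝕂)))
        (b : H →L[𝕂] (W →SL[starRingEnd 𝕂] 𝕂)),
      ∀ m : X, 𝔠 m = L m + b)
    (hwp : ∀ m ∈ 𝒢, ∀ φ : W →SL[starRingEnd 𝕂] 𝕂,
      ∃! u : V, ∀ w : W, a₁ u w + 𝔠 m (j u) w = φ w)
    (S : X → V)
    (hS : ∀ m ∈ 𝒢, ∀ w : W, a₁ (S m) w + 𝔠 m (j (S m)) w = Φ m w) :
    ∃ S' : X → (X →L[𝕂] V),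
      (∀ m ∈ 𝒢, HasFDerivAt S (S' m) m) ∧
      ContinuousOn S' 𝒢 ∧
      ∀ m₀ ∈ 𝒢, ∀ κ : ℝ, κ ∈ Set.Ioo (0 : ℝ) 1 →
        ∃ ρ > (0 : ℝ), Metric.closedBall m₀ ρ ⊆ 𝒢 ∧
          (∃ K : ℝ, ∀ m ∈ Metric.closedBall m₀ ρ, ‖S' m‖ ≤ K) ∧
          ∀ m₁ ∈ Metric.closedBall m₀ ρ, ∀ m₂ ∈ Metric.closedBall m₀ ρ,
            ‖j (S m₁ - S m₂ - S' m₂ (m₁ - m₂))‖ ≤ κ * ‖j (S m₁ - S m₂)‖ ∧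
            ‖S m₁ - S m₂ - S' m₂ (m₁ - m₂)‖ ≤ κ * ‖S m₁ - S m₂‖ := by
  obtain ⟨LΦ, bΦ, hΦ⟩ := hΦaff
  obtain ⟨Lc, bc, hc𝔠⟩ := h𝔠aff
  have hAm : ∀ (m : X) (v : V) (w : W),
      (a₁ + (𝔠 m).comp j) v w = a₁ v w + 𝔠 m (j v) w := by
    intro m v w
    simp
  refine tcc_aux j 𝒢 h𝒢open LΦ bΦ Φ hΦ Lc (fun m => a₁ + (𝔠 m).comp j) ?_ ?_ S ?_
  · intro m₁ m₂ v
    simp only [ContinuousLinearMap.add_apply, ContinuousLinearMap.coe_comp',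
      Function.comp_apply, hc𝔠, map_sub, ContinuousLinearMap.sub_apply]
    abel
  · intro m hm
    constructor
    · intro u u' huu
      refine (hwp m hm ((a₁ + (𝔠 m).comp j) u')).unique (fun w => ?_)
        (fun w => (hAm m u' w).symm)
      rw [← hAm m u w]
      exact DFunLike.congr_fun huu w
    · intro φ
      obtain ⟨u, hu, -⟩ := hwp m hm φ
      refine ⟨u, ?_⟩
      ext w
      rw [hAm m u w]
      exact hu w
  · intro m hm
    ext w
    rw [hAm m (S m) w]
    exact hS m hm w
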